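/- If A₁, A₂, …, Aₙ are row-stochastic N×N matrices each with λ(Aᵢ) ≤ c for some c < 1, then δ(A₁A₂⋯Aₙ) ≤ cⁿ⁻¹·δ(Aₙ) ≤ cⁿ⁻¹, and hence the rows of the product A₁⋯Aₙ become uniformly close to each other as n → ∞. -/

import Mathlib

def RowStochastic {m n : Type*} [Fintype n] (A : Matrix m n ℝ) : Prop :=
  (∀ i j, 0 ≤ A i j) ∧ ∀ i, ∑ j, A i j = 1

noncomputable def ergCoef {N : ℕ} (P : Matrix (Fin N) (Fin N) ℝ) : ℝ :=
  ⨅ i₁, ⨅ i₂, ∑ j, min (P i₁ j) (P i₂ j)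

noncomputable def lambdaCoef {N : ℕ} (P : Matrix (Fin N) (Fin N) ℝ) : ℝ :=
  1 - ergCoef P

noncomputable def deltaCoef {N : ℕ} (P : Matrix (Fin N) (Fin N) ℝ) : ℝ :=
  ⨆ j, ⨆ i₁, ⨆ i₂, |P i₁ j - P i₂ j|

def Scrambling {N : ℕ} (P : Matrix (Fin N) (Fin N) ℝ) : Prop :=
  0 < ergCoef P

section Aux
variable {N : ℕ}

lemma rs_entry_le_one {P : Matrix (Fin N) (Fin N) ℝ} (hP : RowStochastic P)
    (i : Fin N) (j : Fin N) : P i j ≤ 1 := by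
  have := hP.2 i
  calc P i j ≤ ∑ k, P i k := Finset.single_le_sum (fun k _ => hP.1 i k) (Finset.mem_univ j)
    _ = 1 := this

lemma rs_abs_le_one {P : Matrix (Fin N) (Fin N) ℝ} (hP : RowStochastic P)
    (i₁ i₂ j : Fin N) : |P i₁ j - P i₂ j| ≤ 1 := by
  rw [abs_sub_le_iff]
  constructor <;> nlinarith [hP.1 i₁ j, hP.1 i₂ j, rs_entry_le_one hP i₁ j, rs_entry_le_one hP i₂ j]

lemma deltaCoef_le [Nonempty (Fin N)] {P : Matrix (Fin N) (Fin N) ℝ} {C : ℝ}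
    (h : ∀ j i₁ i₂, |P i₁ j - P i₂ j| ≤ C) : deltaCoef P ≤ C :=
  ciSup_le fun j => ciSup_le fun i₁ => ciSup_le fun i₂ => h j i₁ i₂

lemma le_deltaCoef {P : Matrix (Fin N) (Fin N) ℝ} (hP : RowStochastic P)
    (j i₁ i₂ : Fin N) : |P i₁ j - P i₂ j| ≤ deltaCoef P := by
  have : Nonempty (Fin N) := ⟨j⟩
  refine le_ciSup_of_le (f := fun j' => ⨆ i₁', ⨆ i₂', |P i₁' j' - P i₂' j'|) ?_ j
    (le_ciSup_of_le (f := fun i₁' => ⨆ i₂', |P i₁' j - P i₂' j|) ?_ i₁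
    (le_ciSup (f := fun i₂' => |P i₁ j - P i₂' j|) ?_ i₂))
  · refine ⟨1, ?_⟩
    rintro x ⟨j', rfl⟩
    exact ciSup_le fun a => ciSup_le fun b => rs_abs_le_one hP a b j'
  · exact ⟨1, by rintro x ⟨a, rfl⟩; exact ciSup_le fun b => rs_abs_le_one hP a b j⟩
  · exact ⟨1, by rintro x ⟨b, rfl⟩; exact rs_abs_le_one hP i₁ b j⟩

lemma deltaCoef_nonneg [Nonempty (Fin N)] {P : Matrix (Fin N) (Fin N) ℝ}
    (hP : RowStochastic P) : 0 ≤ deltaCoef P := by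
  have i : Fin N := Classical.arbitrary _
  have := le_deltaCoef hP i i i
  simpa using this

lemma deltaCoef_le_one [Nonempty (Fin N)] {P : Matrix (Fin N) (Fin N) ℝ}
    (hP : RowStochastic P) : deltaCoef P ≤ 1 :=
  deltaCoef_le fun j i₁ i₂ => rs_abs_le_one hP i₁ i₂ j

lemma ergCoef_le [Nonempty (Fin N)] {P : Matrix (Fin N) (Fin N) ℝ} (hP : RowStochastic P)
    (i₁ i₂ : Fin N) : ergCoef P ≤ ∑ j, min (P i₁ j) (P i₂ j) := by
  have hb : ∀ a b : Fin N, (0:ℝ) ≤ ∑ j, min (P a j) (P b j) := fun a b =>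
    Finset.sum_nonneg fun j _ => le_min (hP.1 a j) (hP.1 b j)
  refine ciInf_le_of_le ?_ i₁ (ciInf_le ?_ i₂)
  · exact ⟨0, by rintro x ⟨a, rfl⟩; exact le_ciInf fun b => hb a b⟩
  · exact ⟨0, by rintro x ⟨b, rfl⟩; exact hb i₁ b⟩

lemma rowStochastic_one [Nonempty (Fin N)] : RowStochastic (1 : Matrix (Fin N) (Fin N) ℝ) := by
  constructor
  · intro i j
    by_cases h : i = j <;> simp [Matrix.one_apply, h]
  · intro i; simp [Matrix.one_apply]

lemma rowStochastic_mul {P Q : Matrix (Fin N) (Fin N) ℝ}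
    (hP : RowStochastic P) (hQ : RowStochastic Q) : RowStochastic (P * Q) := by
  constructor
  · intro i j
    rw [Matrix.mul_apply]
    exact Finset.sum_nonneg fun k _ => mul_nonneg (hP.1 i k) (hQ.1 k j)
  · intro i
    simp only [Matrix.mul_apply]
    rw [Finset.sum_comm]
    calc ∑ k, ∑ j, P i k * Q k j = ∑ k, P i k * ∑ j, Q k j := by
          simp [Finset.mul_sum]
      _ = 1 := by simp [hQ.2, hP.2 i]

lemma delta_mul_le [Nonempty (Fin N)] {P Q : Matrix (Fin N) (Fin N) ℝ}
    (hP : RowStochastic P) (hQ : RowStochastic Q) :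
    deltaCoef (P * Q) ≤ lambdaCoef P * deltaCoef Q := by
  have key : ∀ j i₁ i₂, (P * Q) i₁ j - (P * Q) i₂ j ≤ lambdaCoef P * deltaCoef Q := by
    intro j i₁ i₂
    set m : Fin N → ℝ := fun k => min (P i₁ k) (P i₂ k) with hm
    set g : Fin N → ℝ := fun k => P i₁ k - m k with hg
    set h : Fin N → ℝ := fun k => P i₂ k - m k with hh
    have hg0 : ∀ k, 0 ≤ g k := fun k => by simp [hg, hm]
    have hh0 : ∀ k, 0 ≤ h k := fun k => by simp [hh, hm]
    set s : ℝ := 1 - ∑ k, m k with hs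
    have hgs : ∑ k, g k = s := by simp [hg, hs, Finset.sum_sub_distrib, hP.2 i₁]
    have hhs : ∑ k, h k = s := by simp [hh, hs, Finset.sum_sub_distrib, hP.2 i₂]
    have hs0 : 0 ≤ s := hgs ▸ Finset.sum_nonneg fun k _ => hg0 k
    have hsl : s ≤ lambdaCoef P := by
      have := ergCoef_le hP i₁ i₂
      simp only [lambdaCoef, hs]
      linarith
    -- max and min of column j of Q
    obtain ⟨kM, -, hkM⟩ := Finset.exists_max_image Finset.univ (fun k => Q k j) ⟨Classical.arbitrary _, Finset.mem_univ _⟩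
    obtain ⟨km, -, hkm⟩ := Finset.exists_min_image Finset.univ (fun k => Q k j) ⟨Classical.arbitrary _, Finset.mem_univ _⟩
    have hdiff : (P * Q) i₁ j - (P * Q) i₂ j = ∑ k, g k * Q k j - ∑ k, h k * Q k j := by
      simp only [Matrix.mul_apply, hg, hh]
      rw [← Finset.sum_sub_distrib, ← Finset.sum_sub_distrib]
      congr 1; ext k; ring
    have h1 : ∑ k, g k * Q k j ≤ s * Q kM j := by
      rw [← hgs, Finset.sum_mul]
      exact Finset.sum_le_sum fun k _ => mul_le_mul_of_nonneg_left (hkM k (Finset.mem_univ k)) (hg0 k)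
    have h2 : s * Q km j ≤ ∑ k, h k * Q k j := by
      rw [← hhs, Finset.sum_mul]
      exact Finset.sum_le_sum fun k _ => mul_le_mul_of_nonneg_left (hkm k (Finset.mem_univ k)) (hh0 k)
    have hQd : Q kM j - Q km j ≤ deltaCoef Q := by
      have := le_deltaCoef hQ j kM km
      exact (le_abs_self _).trans this
    have hQd0 : 0 ≤ Q kM j - Q km j := by
      have := (hkm kM (Finset.mem_univ _)); linarith
    calc (P * Q) i₁ j - (P * Q) i₂ j ≤ s * Q kM j - s * Q km j := by rw [hdiff]; linarith
      _ = s * (Q kM j - Q km j) := by ring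
      _ ≤ lambdaCoef P * deltaCoef Q := mul_le_mul hsl hQd hQd0 (hs0.trans hsl)
  refine deltaCoef_le fun j i₁ i₂ => ?_
  rw [abs_sub_le_iff]
  exact ⟨key j i₁ i₂, key j i₂ i₁⟩

lemma rowStochastic_list_prod [Nonempty (Fin N)] (L : List (Matrix (Fin N) (Fin N) ℝ))
    (h : ∀ M ∈ L, RowStochastic M) : RowStochastic L.prod := by
  induction L with
  | nil => simpa using rowStochastic_one
  | cons a t ih =>
    rw [List.prod_cons]
    exact rowStochastic_mul (h a List.mem_cons_self) (ih fun M hM => h M (List.mem_cons_of_mem a hM))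

lemma key_lemma [Nonempty (Fin N)] (c : ℝ) (hc0 : 0 ≤ c) :
    ∀ n, 1 ≤ n → ∀ (B : ℕ → Matrix (Fin N) (Fin N) ℝ),
      (∀ i, RowStochastic (B i)) → (∀ i, lambdaCoef (B i) ≤ c) →
      deltaCoef (((List.range n).map B).prod) ≤ c ^ (n - 1) * deltaCoef (B (n - 1)) := by
  intro n
  induction n with
  | zero => omega
  | succ m ih =>
    intro _ B hBr hBl
    rw [List.range_succ_eq_map, List.map_cons, List.map_map, List.prod_cons]
    rcases Nat.eq_zero_or_pos m with hm | hm
    · subst hm; simp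
    · have hrest : RowStochastic ((List.map (B ∘ Nat.succ) (List.range m)).prod) := by
        apply rowStochastic_list_prod
        intro M hM
        simp only [List.mem_map] at hM
        obtain ⟨k, -, rfl⟩ := hM
        exact hBr _
      have hih := ih hm (B ∘ Nat.succ) (fun i => hBr _) (fun i => hBl _)
      have hstep := delta_mul_le (hBr 0) hrest
      have h2 : lambdaCoef (B 0) * deltaCoef ((List.map (B ∘ Nat.succ) (List.range m)).prod)
          ≤ c * deltaCoef ((List.map (B ∘ Nat.succ) (List.range m)).prod) :=
        mul_le_mul_of_nonneg_right (hBl 0) (deltaCoef_nonneg hrest)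
      have h3 : c * deltaCoef ((List.map (B ∘ Nat.succ) (List.range m)).prod)
          ≤ c * (c ^ (m - 1) * deltaCoef ((B ∘ Nat.succ) (m - 1))) :=
        mul_le_mul_of_nonneg_left hih hc0
      have hBm : (B ∘ Nat.succ) (m - 1) = B m := by
        have h := Nat.sub_add_cancel hm
        simp only [Function.comp_apply, Nat.succ_eq_add_one, h]
      have hpow : c * c ^ (m - 1) = c ^ m := by
        rw [← pow_succ', Nat.sub_add_cancel hm]
      calc deltaCoef (B 0 * (List.map (B ∘ Nat.succ) (List.range m)).prod)
          ≤ lambdaCoef (B 0) * deltaCoef ((List.map (B ∘ Nat.succ) (List.range m)).prod) := hstep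
        _ ≤ c * (c ^ (m - 1) * deltaCoef ((B ∘ Nat.succ) (m - 1))) := le_trans h2 h3
        _ = c ^ m * deltaCoef (B m) := by rw [hBm, ← mul_assoc, hpow]
        _ = c ^ (m + 1 - 1) * deltaCoef (B (m + 1 - 1)) := by norm_num

end Aux

theorem stmt_9 {N : ℕ} (c : ℝ) (hc0 : 0 ≤ c) (hc1 : c < 1)
    (A : ℕ → Matrix (Fin N) (Fin N) ℝ)
    (hA : ∀ i, RowStochastic (A i)) (hlam : ∀ i, lambdaCoef (A i) ≤ c)
    (n : ℕ) (hn : 1 ≤ n) :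
    deltaCoef (((List.range n).map A).prod) ≤ c ^ (n - 1) * deltaCoef (A (n - 1)) ∧
    deltaCoef (((List.range n).map A).prod) ≤ c ^ (n - 1) := by
  rcases Nat.eq_zero_or_pos N with hN | hN
  · exfalso
    have h0 := hlam 0
    have : ergCoef (A 0) = 0 := by
      have : IsEmpty (Fin N) := by subst hN; infer_instance
      simp [ergCoef, Real.iInf_of_isEmpty]
    rw [lambdaCoef, this] at h0
    linarith
  · have : Nonempty (Fin N) := ⟨⟨0, hN⟩⟩
    have h1 := key_lemma c hc0 n hn A hA hlam
    refine ⟨h1, h1.trans ?_⟩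
    have := deltaCoef_le_one (hA (n - 1))
    nlinarith [pow_nonneg hc0 (n - 1)]
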